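/- Let (N, ∘_λ) be a commutative associative conformal superalgebra and let D be an even derivation of (N, ∘_λ). Define [a_λ b] := a ∘_λ D(b) − (−1)^{|a||b|} b ∘_{−∂−λ} D(a) for homogeneous a, b ∈ N. Then (N, ∘_λ, [·_λ ·]) is a transposed Poisson conformal superalgebra. -/
import Mathlib


open Polynomial
open scoped TensorProduct

noncomputable section

namespace TPCSAFormal

/-- The super-sign `(-1)^{i·j}` for parities `i, j ∈ ℤ/2ℤ`. -/
def sgn (i j : ZMod 2) : ℂ := (-1 : ℂ) ^ (i.val * j.val)

variable (L : Type*) [AddCommGroup L] [Module ℂ L]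
  [Module (Polynomial ℂ) L] [IsScalarTower ℂ (Polynomial ℂ) L]

/-- A conformal `λ`-product on the `ℂ[∂]`-module `L`, recorded by its family of `n`-th
product coefficients: `a ∘_λ b = ∑_n λ^n • coeff n a b`, with finitely many nonzero terms.
This is exactly the data of a `ℂ`-bilinear map `L ⊗ L → ℂ[λ] ⊗ L`. -/
structure ConformalProduct where
  coeff : ℕ → L →ₗ[ℂ] L →ₗ[ℂ] L
  coeff_finite : ∀ a b : L, ∃ N : ℕ, ∀ n : ℕ, N ≤ n → coeff n a b = 0

variable {L}

/-- The value `a ∘_λ b` of the `λ`-product at `λ ∈ ℂ`.  Since `ℂ` is infinite, identities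
between such values for all `λ` are equivalent to the corresponding polynomial identities. -/
def ConformalProduct.mul (m : ConformalProduct L) (lam : ℂ) (a b : L) : L :=
  ∑ᶠ n : ℕ, lam ^ n • m.coeff n a b

/-- The value `a ∘_{-∂-λ} b`, where `∂` acts on `L` as scalar multiplication by
`X ∈ ℂ[∂]` (the variable `λ` being replaced by the operator `-∂-λ`). -/
def ConformalProduct.cmul (m : ConformalProduct L) (lam : ℂ) (a b : L) : L :=
  ∑ᶠ n : ℕ, ((-((X : Polynomial ℂ) + C lam)) ^ n) • m.coeff n a b

variable (L) in
/-- A `ℤ₂`-grading on `L` making it a `ℤ₂`-graded `ℂ[∂]`-module: `L = L₀ ⊕ L₁` with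
`∂ L_i ⊆ L_i`, where `∂` acts as multiplication by `X ∈ ℂ[∂]`. -/
structure SuperModule where
  grade : ZMod 2 → Submodule ℂ L
  isInternal : DirectSum.IsInternal grade
  X_smul_mem : ∀ (i : ZMod 2) (a : L), a ∈ grade i → (X : Polynomial ℂ) • a ∈ grade i

/-- `m` is an even `λ`-product on the `ℤ₂`-graded `ℂ[∂]`-module `(L, S)`:
it is even with respect to the grading and conformally sesquilinear. -/
structure IsLambdaProduct (S : SuperModule L) (m : ConformalProduct L) : Prop where
  even : ∀ (i j : ZMod 2) (a b : L), a ∈ S.grade i → b ∈ S.grade j →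
    ∀ n : ℕ, m.coeff n a b ∈ S.grade (i + j)
  sesq_left : ∀ (lam : ℂ) (a b : L),
    m.mul lam ((X : Polynomial ℂ) • a) b = (-lam) • m.mul lam a b
  sesq_right : ∀ (lam : ℂ) (a b : L),
    m.mul lam a ((X : Polynomial ℂ) • b) =
      (X : Polynomial ℂ) • m.mul lam a b + lam • m.mul lam a b

/-- `(L, S, m)` is a commutative associative conformal superalgebra. -/
structure IsCommAssoc (S : SuperModule L) (m : ConformalProduct L)
    extends IsLambdaProduct S m : Prop where
  comm : ∀ (i j : ZMod 2) (a b : L), a ∈ S.grade i → b ∈ S.grade j →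
    ∀ lam : ℂ, m.mul lam a b = sgn i j • m.cmul lam b a
  assoc : ∀ (lam mu : ℂ) (a b c : L),
    m.mul lam a (m.mul mu b c) = m.mul (lam + mu) (m.mul lam a b) c

/-- `(L, S, br)` is a Lie conformal superalgebra. -/
structure IsLie (S : SuperModule L) (br : ConformalProduct L)
    extends IsLambdaProduct S br : Prop where
  skew : ∀ (i j : ZMod 2) (a b : L), a ∈ S.grade i → b ∈ S.grade j →
    ∀ lam : ℂ, br.mul lam a b = -(sgn i j • br.cmul lam b a)
  jacobi : ∀ (i j : ZMod 2) (a b : L), a ∈ S.grade i → b ∈ S.grade j →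
    ∀ (c : L) (lam mu : ℂ),
      br.mul lam a (br.mul mu b c) =
        br.mul (lam + mu) (br.mul lam a b) c + sgn i j • br.mul mu b (br.mul lam a c)

/-- `(L, S, m, br)` is a transposed Poisson conformal superalgebra. -/
structure IsTPCSA (S : SuperModule L) (m br : ConformalProduct L) : Prop where
  commAssoc : IsCommAssoc S m
  lie : IsLie S br
  transposedLeibniz : ∀ (i j : ZMod 2) (a b : L), a ∈ S.grade i → b ∈ S.grade j →
    ∀ (c : L) (lam mu : ℂ),
      (2 : ℂ) • m.mul lam a (br.mul mu b c) =
        br.mul (lam + mu) (m.mul lam a b) c + sgn i j • br.mul mu b (m.mul lam a c)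

/-- `(L, S, m, br)` is a Poisson conformal superalgebra. -/
structure IsPCSA (S : SuperModule L) (m br : ConformalProduct L) : Prop where
  commAssoc : IsCommAssoc S m
  lie : IsLie S br
  leibniz : ∀ (i j : ZMod 2) (a b : L), a ∈ S.grade i → b ∈ S.grade j →
    ∀ (c : L) (lam mu : ℂ),
      br.mul lam a (m.mul mu b c) =
        m.mul (lam + mu) (br.mul lam a b) c + sgn i j • m.mul mu b (br.mul lam a c)

/-- `(L, S, br, α)` is a Hom-Lie conformal superalgebra. -/
structure IsHomLie (S : SuperModule L) (br : ConformalProduct L) (α : L → L)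
    extends IsLambdaProduct S br : Prop where
  map_smul_add : ∀ (c : ℂ) (a b : L), α (c • a + b) = c • α a + α b
  map_grade : ∀ (i : ZMod 2) (a : L), a ∈ S.grade i → α a ∈ S.grade i
  commute_partial : ∀ a : L, α ((X : Polynomial ℂ) • a) = (X : Polynomial ℂ) • α a
  skew : ∀ (i j : ZMod 2) (a b : L), a ∈ S.grade i → b ∈ S.grade j →
    ∀ lam : ℂ, br.mul lam a b = -(sgn i j • br.cmul lam b a)
  homJacobi : ∀ (i j : ZMod 2) (a b : L), a ∈ S.grade i → b ∈ S.grade j →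
    ∀ (c : L) (lam mu : ℂ),
      br.mul lam (α a) (br.mul mu b c) =
        br.mul (lam + mu) (br.mul lam a b) (α c) + sgn i j • br.mul mu (α b) (br.mul lam a c)

/-- `(L, S, p)` is a left-symmetric conformal superalgebra. -/
structure IsLeftSymmetric (S : SuperModule L) (p : ConformalProduct L)
    extends IsLambdaProduct S p : Prop where
  leftSym : ∀ (i j : ZMod 2) (a b : L), a ∈ S.grade i → b ∈ S.grade j →
    ∀ (c : L) (lam mu : ℂ),
      p.mul (lam + mu) (p.mul lam a b) c - p.mul lam a (p.mul mu b c) =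
        sgn i j • (p.mul (lam + mu) (p.mul mu b a) c - p.mul mu b (p.mul lam a c))

/-- `(L, S, p)` is a (left) Novikov conformal superalgebra. -/
structure IsNovikov (S : SuperModule L) (p : ConformalProduct L)
    extends IsLeftSymmetric S p : Prop where
  novikov : ∀ (j k : ZMod 2) (b c : L), b ∈ S.grade j → c ∈ S.grade k →
    ∀ (a : L) (lam mu : ℂ),
      p.mul (lam + mu) (p.mul lam a b) c = sgn j k • p.cmul mu (p.mul lam a c) b

/-- `(L, S, mc, p)` is a Novikov-Poisson conformal superalgebra. -/
structure IsNovikovPoisson (S : SuperModule L) (mc p : ConformalProduct L) : Prop where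
  commAssoc : IsCommAssoc S mc
  novikov : IsNovikov S p
  compat₁ : ∀ (lam mu : ℂ) (a b c : L),
    p.mul (lam + mu) (mc.mul lam a b) c = mc.mul lam a (p.mul mu b c)
  compat₂ : ∀ (i j : ZMod 2) (a b : L), a ∈ S.grade i → b ∈ S.grade j →
    ∀ (c : L) (lam mu : ℂ),
      mc.mul (lam + mu) (p.mul lam a b) c - p.mul lam a (mc.mul mu b c) =
        sgn i j • (mc.mul (lam + mu) (p.mul mu b a) c - p.mul mu b (mc.mul lam a c))

/-- `(L, S, mc, p)` is a pre-Lie commutative conformal superalgebra. -/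
structure IsPreLieComm (S : SuperModule L) (mc p : ConformalProduct L) : Prop where
  commAssoc : IsCommAssoc S mc
  leftSymmetric : IsLeftSymmetric S p
  compat : ∀ (i j : ZMod 2) (a b : L), a ∈ S.grade i → b ∈ S.grade j →
    ∀ (c : L) (lam mu : ℂ),
      p.mul lam a (mc.mul mu b c) =
        mc.mul (lam + mu) (p.mul lam a b) c + sgn i j • mc.mul mu b (p.mul lam a c)

/-- `(L, S, mc, p)` is a pre-Lie Poisson conformal superalgebra. -/
structure IsPreLiePoisson (S : SuperModule L) (mc p : ConformalProduct L) : Prop where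
  commAssoc : IsCommAssoc S mc
  leftSymmetric : IsLeftSymmetric S p
  compat₁ : ∀ (lam mu : ℂ) (a b c : L),
    p.mul (lam + mu) (mc.mul lam a b) c = mc.mul lam a (p.mul mu b c)
  compat₂ : ∀ (i j : ZMod 2) (a b : L), a ∈ S.grade i → b ∈ S.grade j →
    ∀ (c : L) (lam mu : ℂ),
      mc.mul (lam + mu) (p.mul lam a b) c - p.mul lam a (mc.mul mu b c) =
        sgn i j • (mc.mul (lam + mu) (p.mul mu b a) c - p.mul mu b (mc.mul lam a c))


/-! ### Auxiliary lemmas for statement 13 -/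

lemma sum_of_bound {R : Type*} [Semiring R] [Module R L] (g : ℕ → R) (f : ℕ → L)
    {N : ℕ} (hf : ∀ n, N ≤ n → f n = 0) :
    ∑ᶠ n : ℕ, g n • f n = ∑ n ∈ Finset.range N, g n • f n := by
  apply finsum_eq_finset_sum_of_support_subset
  intro n hn
  simp only [Function.mem_support, ne_eq] at hn
  simp only [Finset.coe_range, Set.mem_Iio]
  by_contra h
  exact hn (by rw [hf n (not_lt.mp h), smul_zero])

lemma mul_eq_sum (m : ConformalProduct L) (lam : ℂ) (a b : L) {N : ℕ}
    (h : ∀ n, N ≤ n → m.coeff n a b = 0) :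
    m.mul lam a b = ∑ n ∈ Finset.range N, lam ^ n • m.coeff n a b :=
  sum_of_bound _ _ h

lemma cmul_eq_sum (m : ConformalProduct L) (lam : ℂ) (a b : L) {N : ℕ}
    (h : ∀ n, N ≤ n → m.coeff n a b = 0) :
    m.cmul lam a b
      = ∑ n ∈ Finset.range N, ((-((X : Polynomial ℂ) + C lam)) ^ n) • m.coeff n a b :=
  sum_of_bound _ _ h

lemma mul_add_left (m : ConformalProduct L) (lam : ℂ) (a a' b : L) :
    m.mul lam (a + a') b = m.mul lam a b + m.mul lam a' b := by
  obtain ⟨N1, h1⟩ := m.coeff_finite a b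
  obtain ⟨N2, h2⟩ := m.coeff_finite a' b
  have h1' : ∀ n, max N1 N2 ≤ n → m.coeff n a b = 0 :=
    fun n hn => h1 n (le_trans (le_max_left _ _) hn)
  have h2' : ∀ n, max N1 N2 ≤ n → m.coeff n a' b = 0 :=
    fun n hn => h2 n (le_trans (le_max_right _ _) hn)
  have h3 : ∀ n, max N1 N2 ≤ n → m.coeff n (a + a') b = 0 := fun n hn => by
    rw [map_add, LinearMap.add_apply, h1' n hn, h2' n hn, add_zero]
  rw [mul_eq_sum m lam a b h1', mul_eq_sum m lam a' b h2', mul_eq_sum m lam (a + a') b h3,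
    ← Finset.sum_add_distrib]
  exact Finset.sum_congr rfl fun n _ => by rw [map_add, LinearMap.add_apply, smul_add]

lemma mul_sub_left (m : ConformalProduct L) (lam : ℂ) (a a' b : L) :
    m.mul lam (a - a') b = m.mul lam a b - m.mul lam a' b := by
  obtain ⟨N1, h1⟩ := m.coeff_finite a b
  obtain ⟨N2, h2⟩ := m.coeff_finite a' b
  have h1' : ∀ n, max N1 N2 ≤ n → m.coeff n a b = 0 :=
    fun n hn => h1 n (le_trans (le_max_left _ _) hn)
  have h2' : ∀ n, max N1 N2 ≤ n → m.coeff n a' b = 0 :=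
    fun n hn => h2 n (le_trans (le_max_right _ _) hn)
  have h3 : ∀ n, max N1 N2 ≤ n → m.coeff n (a - a') b = 0 := fun n hn => by
    rw [map_sub, LinearMap.sub_apply, h1' n hn, h2' n hn, sub_zero]
  rw [mul_eq_sum m lam a b h1', mul_eq_sum m lam a' b h2', mul_eq_sum m lam (a - a') b h3,
    ← Finset.sum_sub_distrib]
  exact Finset.sum_congr rfl fun n _ => by rw [map_sub, LinearMap.sub_apply, smul_sub]

lemma mul_add_right (m : ConformalProduct L) (lam : ℂ) (a b b' : L) :
    m.mul lam a (b + b') = m.mul lam a b + m.mul lam a b' := by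
  obtain ⟨N1, h1⟩ := m.coeff_finite a b
  obtain ⟨N2, h2⟩ := m.coeff_finite a b'
  have h1' : ∀ n, max N1 N2 ≤ n → m.coeff n a b = 0 :=
    fun n hn => h1 n (le_trans (le_max_left _ _) hn)
  have h2' : ∀ n, max N1 N2 ≤ n → m.coeff n a b' = 0 :=
    fun n hn => h2 n (le_trans (le_max_right _ _) hn)
  have h3 : ∀ n, max N1 N2 ≤ n → m.coeff n a (b + b') = 0 := fun n hn => by
    rw [map_add, h1' n hn, h2' n hn, add_zero]
  rw [mul_eq_sum m lam a b h1', mul_eq_sum m lam a b' h2', mul_eq_sum m lam a (b + b') h3,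
    ← Finset.sum_add_distrib]
  exact Finset.sum_congr rfl fun n _ => by rw [map_add, smul_add]

lemma mul_sub_right (m : ConformalProduct L) (lam : ℂ) (a b b' : L) :
    m.mul lam a (b - b') = m.mul lam a b - m.mul lam a b' := by
  obtain ⟨N1, h1⟩ := m.coeff_finite a b
  obtain ⟨N2, h2⟩ := m.coeff_finite a b'
  have h1' : ∀ n, max N1 N2 ≤ n → m.coeff n a b = 0 :=
    fun n hn => h1 n (le_trans (le_max_left _ _) hn)
  have h2' : ∀ n, max N1 N2 ≤ n → m.coeff n a b' = 0 :=
    fun n hn => h2 n (le_trans (le_max_right _ _) hn)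
  have h3 : ∀ n, max N1 N2 ≤ n → m.coeff n a (b - b') = 0 := fun n hn => by
    rw [map_sub, h1' n hn, h2' n hn, sub_zero]
  rw [mul_eq_sum m lam a b h1', mul_eq_sum m lam a b' h2', mul_eq_sum m lam a (b - b') h3,
    ← Finset.sum_sub_distrib]
  exact Finset.sum_congr rfl fun n _ => by rw [map_sub, smul_sub]

lemma mul_smul_left (m : ConformalProduct L) (lam : ℂ) (c : ℂ) (a b : L) :
    m.mul lam (c • a) b = c • m.mul lam a b := by
  obtain ⟨N, h⟩ := m.coeff_finite a b
  have h' : ∀ n, N ≤ n → m.coeff n (c • a) b = 0 := fun n hn => by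
    rw [map_smul, LinearMap.smul_apply, h n hn, smul_zero]
  rw [mul_eq_sum m lam (c • a) b h', mul_eq_sum m lam a b h, Finset.smul_sum]
  exact Finset.sum_congr rfl fun n _ => by
    rw [map_smul, LinearMap.smul_apply, smul_comm]

lemma mul_zero_left (m : ConformalProduct L) (lam : ℂ) (b : L) :
    m.mul lam 0 b = 0 := by
  have h : ∀ n, 0 ≤ n → m.coeff n (0 : L) b = 0 := fun n _ => by
    rw [map_zero, LinearMap.zero_apply]
  rw [mul_eq_sum m lam 0 b h]
  simp

lemma mul_neg_left (m : ConformalProduct L) (lam : ℂ) (a b : L) :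
    m.mul lam (-a) b = -m.mul lam a b := by
  rw [← zero_sub, mul_sub_left, mul_zero_left, zero_sub]

lemma mul_sum_left (m : ConformalProduct L) (lam : ℂ) {ι : Type*} (s : Finset ι)
    (f : ι → L) (b : L) :
    m.mul lam (∑ i ∈ s, f i) b = ∑ i ∈ s, m.mul lam (f i) b := by
  classical
  induction s using Finset.cons_induction with
  | empty => simp [mul_zero_left]
  | cons i s hi ih => rw [Finset.sum_cons, Finset.sum_cons, mul_add_left, ih]

lemma mul_negpow {S : SuperModule L} {m : ConformalProduct L} (hm : IsLambdaProduct S m)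
    (lam nu : ℂ) (n : ℕ) (a b : L) :
    m.mul nu ((((-((X : Polynomial ℂ) + C lam))) ^ n) • a) b
      = (nu - lam) ^ n • m.mul nu a b := by
  induction n with
  | zero => simp
  | succ n ih =>
    rw [pow_succ', mul_smul]
    set y := ((-((X : Polynomial ℂ) + C lam)) ^ n) • a with hy
    have hsplit : (-((X : Polynomial ℂ) + C lam)) • y
        = -((X : Polynomial ℂ) • y) - lam • y := by
      rw [neg_smul, add_smul, ← Polynomial.algebraMap_eq, algebraMap_smul, neg_add,
        ← sub_eq_add_neg]
    rw [hsplit, mul_sub_left, mul_neg_left, hm.sesq_left, mul_smul_left, ih]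
    rw [neg_smul, neg_neg, smul_smul, smul_smul, ← sub_smul]
    congr 1
    rw [pow_succ']
    ring

lemma sgn_mul_self (i j : ZMod 2) : sgn i j * sgn j i = 1 := by
  unfold sgn
  rw [Nat.mul_comm j.val i.val, ← mul_pow]
  norm_num

lemma sgn_sgn_smul (i j : ZMod 2) (x : L) : sgn i j • sgn j i • x = x := by
  rw [smul_smul, sgn_mul_self, one_smul]

lemma left_comm_mul {S : SuperModule L} {m : ConformalProduct L} (hm : IsCommAssoc S m)
    {i j : ZMod 2} {a b : L} (ha : a ∈ S.grade i) (hb : b ∈ S.grade j)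
    (x : L) (lam mu : ℂ) :
    m.mul lam a (m.mul mu b x) = sgn i j • m.mul mu b (m.mul lam a x) := by
  obtain ⟨N, hN⟩ := m.coeff_finite b a
  have key : m.mul (lam + mu) (m.cmul lam b a) x = m.mul (lam + mu) (m.mul mu b a) x := by
    rw [cmul_eq_sum m lam b a hN, mul_eq_sum m mu b a hN, mul_sum_left, mul_sum_left]
    refine Finset.sum_congr rfl fun n _ => ?_
    rw [mul_negpow hm.toIsLambdaProduct, mul_smul_left, add_sub_cancel_left]
  rw [hm.assoc, hm.comm i j a b ha hb lam, mul_smul_left, key, add_comm lam mu,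
    hm.assoc mu lam b a x]

/-- The derivation bracket `[a_λ b] = a ∘_λ D(b) - D(a) ∘_λ b`. -/
def derivBracket (m : ConformalProduct L) (D : L →ₗ[Polynomial ℂ] L) :
    ConformalProduct L where
  coeff n := LinearMap.mk₂ ℂ (fun a b => m.coeff n a (D b) - m.coeff n (D a) b)
    (fun a a' b => by
      simp only [map_add, LinearMap.add_apply]
      abel)
    (fun c a b => by
      have hD : D (c • a) = c • D a := D.map_smul_of_tower c a
      simp only [hD, map_smul, LinearMap.smul_apply, smul_sub])
    (fun a b b' => by
      simp only [map_add, LinearMap.add_apply]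
      abel)
    (fun c a b => by
      have hD : D (c • b) = c • D b := D.map_smul_of_tower c b
      simp only [hD, map_smul, LinearMap.smul_apply, smul_sub])
  coeff_finite a b := by
    obtain ⟨N1, h1⟩ := m.coeff_finite a (D b)
    obtain ⟨N2, h2⟩ := m.coeff_finite (D a) b
    refine ⟨max N1 N2, fun n hn => ?_⟩
    simp only [LinearMap.mk₂_apply]
    rw [h1 n (le_trans (le_max_left _ _) hn), h2 n (le_trans (le_max_right _ _) hn),
      sub_zero]

lemma derivBracket_coeff (m : ConformalProduct L) (D : L →ₗ[Polynomial ℂ] L)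
    (n : ℕ) (a b : L) :
    (derivBracket m D).coeff n a b = m.coeff n a (D b) - m.coeff n (D a) b := rfl

lemma derivBracket_mul (m : ConformalProduct L) (D : L →ₗ[Polynomial ℂ] L)
    (lam : ℂ) (a b : L) :
    (derivBracket m D).mul lam a b = m.mul lam a (D b) - m.mul lam (D a) b := by
  obtain ⟨N1, h1⟩ := m.coeff_finite a (D b)
  obtain ⟨N2, h2⟩ := m.coeff_finite (D a) b
  have h1' : ∀ n, max N1 N2 ≤ n → m.coeff n a (D b) = 0 :=
    fun n hn => h1 n (le_trans (le_max_left _ _) hn)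
  have h2' : ∀ n, max N1 N2 ≤ n → m.coeff n (D a) b = 0 :=
    fun n hn => h2 n (le_trans (le_max_right _ _) hn)
  have h3 : ∀ n, max N1 N2 ≤ n → (derivBracket m D).coeff n a b = 0 := fun n hn => by
    rw [derivBracket_coeff, h1' n hn, h2' n hn, sub_zero]
  rw [mul_eq_sum (derivBracket m D) lam a b h3, mul_eq_sum m lam a (D b) h1',
    mul_eq_sum m lam (D a) b h2', ← Finset.sum_sub_distrib]
  exact Finset.sum_congr rfl fun n _ => by rw [derivBracket_coeff, smul_sub]

lemma derivBracket_cmul (m : ConformalProduct L) (D : L →ₗ[Polynomial ℂ] L)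
    (lam : ℂ) (a b : L) :
    (derivBracket m D).cmul lam a b = m.cmul lam a (D b) - m.cmul lam (D a) b := by
  obtain ⟨N1, h1⟩ := m.coeff_finite a (D b)
  obtain ⟨N2, h2⟩ := m.coeff_finite (D a) b
  have h1' : ∀ n, max N1 N2 ≤ n → m.coeff n a (D b) = 0 :=
    fun n hn => h1 n (le_trans (le_max_left _ _) hn)
  have h2' : ∀ n, max N1 N2 ≤ n → m.coeff n (D a) b = 0 :=
    fun n hn => h2 n (le_trans (le_max_right _ _) hn)
  have h3 : ∀ n, max N1 N2 ≤ n → (derivBracket m D).coeff n a b = 0 := fun n hn => by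
    rw [derivBracket_coeff, h1' n hn, h2' n hn, sub_zero]
  rw [cmul_eq_sum (derivBracket m D) lam a b h3, cmul_eq_sum m lam a (D b) h1',
    cmul_eq_sum m lam (D a) b h2', ← Finset.sum_sub_distrib]
  exact Finset.sum_congr rfl fun n _ => by rw [derivBracket_coeff, smul_sub]

/-- if `D` is an even derivation of a commutative associative conformal
superalgebra `(N, ∘_λ)`, then the bracket
`[a_λ b] = a ∘_λ D(b) - (-1)^{|a||b|} b ∘_{-∂-λ} D(a)` makes `N` a transposed Poisson
conformal superalgebra. -/
theorem statement_13 (S : SuperModule L) (m : ConformalProduct L)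
    (hm : IsCommAssoc S m) (D : L →ₗ[Polynomial ℂ] L)
    (hD_grade : ∀ (i : ZMod 2) (a : L), a ∈ S.grade i → D a ∈ S.grade i)
    (hD_der : ∀ (lam : ℂ) (a b : L),
      D (m.mul lam a b) = m.mul lam (D a) b + m.mul lam a (D b)) :
    ∃ br : ConformalProduct L,
      (∀ (i j : ZMod 2) (a b : L), a ∈ S.grade i → b ∈ S.grade j →
        ∀ lam : ℂ, br.mul lam a b = m.mul lam a (D b) - sgn i j • m.cmul lam b (D a)) ∧
      IsTPCSA S m br := by
  classical
  refine ⟨derivBracket m D, ?_, ?_⟩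
  · intro i j a b ha hb lam
    rw [derivBracket_mul, hm.comm i j (D a) b (hD_grade i a ha) hb lam]
  · have hlp : IsLambdaProduct S (derivBracket m D) := by
      refine ⟨?_, ?_, ?_⟩
      · intro i j a b ha hb n
        rw [derivBracket_coeff]
        exact Submodule.sub_mem _ (hm.even i j a (D b) ha (hD_grade j b hb) n)
          (hm.even i j (D a) b (hD_grade i a ha) hb n)
      · intro lam a b
        rw [derivBracket_mul, derivBracket_mul, D.map_smul, hm.sesq_left, hm.sesq_left,
          smul_sub]
      · intro lam a b
        rw [derivBracket_mul, derivBracket_mul, D.map_smul, hm.sesq_right, hm.sesq_right,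
          smul_sub, smul_sub]
        abel
    have hskew : ∀ (i j : ZMod 2) (a b : L), a ∈ S.grade i → b ∈ S.grade j →
        ∀ lam : ℂ, (derivBracket m D).mul lam a b
          = -(sgn i j • (derivBracket m D).cmul lam b a) := by
      intro i j a b ha hb lam
      rw [derivBracket_mul, derivBracket_cmul,
        hm.comm i j a (D b) ha (hD_grade j b hb) lam,
        hm.comm i j (D a) b (hD_grade i a ha) hb lam, smul_sub]
      abel
    have hjac : ∀ (i j : ZMod 2) (a b : L), a ∈ S.grade i → b ∈ S.grade j →
        ∀ (c : L) (lam mu : ℂ),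
          (derivBracket m D).mul lam a ((derivBracket m D).mul mu b c) =
            (derivBracket m D).mul (lam + mu) ((derivBracket m D).mul lam a b) c
              + sgn i j • (derivBracket m D).mul mu b ((derivBracket m D).mul lam a c) := by
      intro i j a b ha hb c lam mu
      have hDa := hD_grade i a ha
      have hDDa := hD_grade i _ hDa
      have hDb := hD_grade j b hb
      simp only [derivBracket_mul, map_sub, hD_der, mul_sub_right, mul_add_right,
        mul_sub_left, mul_add_left]
      simp only [← hm.assoc]
      rw [left_comm_mul hm hb hDa (D c), left_comm_mul hm hb ha, left_comm_mul hm hb hDDa,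
        left_comm_mul hm hDb ha, left_comm_mul hm hDb hDa]
      simp only [smul_sub, smul_add, sgn_sgn_smul]
      abel
    have hleib : ∀ (i j : ZMod 2) (a b : L), a ∈ S.grade i → b ∈ S.grade j →
        ∀ (c : L) (lam mu : ℂ),
          (2 : ℂ) • m.mul lam a ((derivBracket m D).mul mu b c) =
            (derivBracket m D).mul (lam + mu) (m.mul lam a b) c
              + sgn i j • (derivBracket m D).mul mu b (m.mul lam a c) := by
      intro i j a b ha hb c lam mu
      have hDa := hD_grade i a ha
      have hDb := hD_grade j b hb
      simp only [derivBracket_mul, hD_der, mul_sub_right, mul_add_right, mul_sub_left,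
        mul_add_left]
      simp only [← hm.assoc]
      rw [left_comm_mul hm hb hDa c, left_comm_mul hm hb ha (D c), left_comm_mul hm hDb ha c]
      simp only [smul_sub, smul_add, sgn_sgn_smul, two_smul]
      abel
    exact ⟨hm, ⟨hlp, hskew, hjac⟩, hleib⟩
end TPCSAFormal
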